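/- Let (W,S) be a Coxeter system with S = {s_0, s_1, ..., s_n}, where (s_i s_j)^{m_{ij}} = e with m_{ii}=2. Then the alternating subgroup W^+ = ker(ε), where ε is the sign character sending each s∈S to -1, is generated by the elements r_i = s_0 s_i for i = 1,...,n, and has the presentation ⟨r_1,...,r_n : r_i^{m_{0i}} = e for all i, (r_i^{-1} r_j)^{m_{ij}} = e for 1 ≤ i < j ≤ n⟩. -/

import Mathlib

open CoxeterSystem

namespace AltCox

variable {W : Type*} [Group W]

/-- Word length of `w` with respect to a generating set `A`:
the minimum length of a word in `A` whose product is `w`. -/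
noncomputable def glen (A : Set W) (w : W) : ℕ :=
  sInf {k | ∃ l : List W, (∀ x ∈ l, x ∈ A) ∧ l.prod = w ∧ l.length = k}

variable {n : ℕ} {M : CoxeterMatrix (Fin (n + 1))} (cs : CoxeterSystem M W)

/-- The alternating subgroup `W⁺`: the kernel of the sign character, i.e. the
set of elements of even Coxeter length. -/
def alt : Subgroup W where
  carrier := {w | Even (cs.length w)}
  one_mem' := by simp [Nat.even_iff]
  mul_mem' := by
    intro a b ha hb
    simp only [Set.mem_setOf_eq, Nat.even_iff] at *
    have := cs.length_mul_mod_two a b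
    omega
  inv_mem' := by
    intro a ha
    simpa [cs.length_inv] using ha

/-- The generating set `R = {r_i = s₀ sᵢ : i ≠ 0}` of `W⁺`. -/
def Rset : Set W := {x | ∃ i : Fin (n + 1), i ≠ 0 ∧ x = cs.simple 0 * cs.simple i}

/-- The symmetrized generating set `R ∪ R⁻¹`. -/
def Rsym : Set W := Rset cs ∪ (Rset cs)⁻¹

/-- `ν w`: the minimum number of letters different from `s₀` among all words
in the simple reflections whose product is `w`. -/
noncomputable def nu (w : W) : ℕ :=
  sInf {k | ∃ ω : List (Fin (n + 1)), cs.wordProd ω = w ∧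
    (ω.filter (fun i => i ≠ 0)).length = k}

/-- `τ w` is the unique element of `{w, w s₀}` lying in `W⁺`. -/
noncomputable def tau (w : W) : W :=
  if Even (cs.length w) then w else w * cs.simple 0

/-- `s₀` is evenly laced: `m₀ᵢ` is even or infinite (encoded by `0`) for all `i ≠ 0`. -/
def EvenlyLaced (M : CoxeterMatrix (Fin (n + 1))) : Prop :=
  ∀ i : Fin (n + 1), i ≠ 0 → Even (M 0 i)

/-- The set of all reflections of `(W, S)`. -/
def Tall : Set W := {t | cs.IsReflection t}

/-- The set `T̂` of reflections conjugate to some simple reflection other than `s₀`. -/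
def That : Set W := {t | ∃ w : W, ∃ i : Fin (n + 1), i ≠ 0 ∧ t = w * cs.simple i * w⁻¹}

/-- The set of odd palindromes of `W⁺` with respect to `R`. -/
def Palin : Set W :=
  {p | ∃ l : List W, (∀ x ∈ l, x ∈ Rsym cs) ∧ Odd l.length ∧ l.reverse = l ∧ l.prod = p}

/-- The set of left-shortening palindromes of `w`. -/
noncomputable def PL (w : W) : Set W :=
  {p ∈ Palin cs | glen (Rsym cs) (p * w) < glen (Rsym cs) w}

/-- The set of right-shortening palindromes of `w`. -/
noncomputable def PR (w : W) : Set W :=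
  {p ∈ Palin cs | glen (Rsym cs) (w * p) < glen (Rsym cs) w}

/-- The right weak order on `(W⁺, R)`. -/
noncomputable def rweak (u w : W) : Prop :=
  Relation.ReflTransGen
    (fun a b => ∃ r ∈ Rsym cs, b = a * r ∧
      glen (Rsym cs) b = glen (Rsym cs) a + 1) u w

/-- The left weak order on `(W⁺, R)`. -/
noncomputable def lweak (u w : W) : Prop :=
  Relation.ReflTransGen
    (fun a b => ∃ r ∈ Rsym cs, b = r * a ∧
      glen (Rsym cs) b = glen (Rsym cs) a + 1) u w

/-- The right strong order on `(W⁺, R)`. -/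
noncomputable def rstrong (u w : W) : Prop :=
  Relation.ReflTransGen
    (fun a b => ∃ p ∈ Palin cs, b = a * p ∧
      glen (Rsym cs) a < glen (Rsym cs) b) u w

/-- The left strong order on `(W⁺, R)`. -/
noncomputable def lstrong (u w : W) : Prop :=
  Relation.ReflTransGen
    (fun a b => ∃ p ∈ Palin cs, b = p * a ∧
      glen (Rsym cs) a < glen (Rsym cs) b) u w

/-- The strong Bruhat order on a Coxeter system. -/
noncomputable def bruhatLE {B : Type*} {M' : CoxeterMatrix B} {W' : Type*} [Group W']
    (cs' : CoxeterSystem M' W') (u w : W') : Prop :=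
  Relation.ReflTransGen
    (fun a b => ∃ t, cs'.IsReflection t ∧ b = a * t ∧ cs'.length a < cs'.length b) u w

/-- The right weak order of a Coxeter system. -/
noncomputable def coxRweak {B : Type*} {M' : CoxeterMatrix B} {W' : Type*} [Group W']
    (cs' : CoxeterSystem M' W') (u w : W') : Prop :=
  Relation.ReflTransGen
    (fun a b => ∃ i, b = a * cs'.simple i ∧ cs'.length b = cs'.length a + 1) u w

/-- The standard parabolic subgroup `W_J` for `J ⊆ S`. -/
def parabolic (J : Set (Fin (n + 1))) : Subgroup W :=
  Subgroup.closure (cs.simple '' J)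

/-- The image `τ(J) = {s₀ sᵢ : sᵢ ∈ J, i ≠ 0}` of a subset `J ⊆ S` containing `s₀`. -/
def tauSet (J : Set (Fin (n + 1))) : Set W :=
  {x | ∃ i ∈ J, i ≠ 0 ∧ x = cs.simple 0 * cs.simple i}

/-- The set `W^J` of minimum-length coset representatives for `W/W_J`. -/
def minReps (J : Set (Fin (n + 1))) : Set W :=
  {w | ∀ i ∈ J, cs.length w < cs.length (w * cs.simple i)}


/-- The defining relations of the Bourbaki presentation of `W⁺`:
`rᵢ^{m₀ᵢ} = e` and `(rᵢ⁻¹ rⱼ)^{mᵢⱼ} = e` for `1 ≤ i < j ≤ n`. -/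
def bourbakiRels (M : CoxeterMatrix (Fin (n + 1))) :
    Set (FreeGroup {i : Fin (n + 1) // i ≠ 0}) :=
  {g | (∃ i : {i : Fin (n + 1) // i ≠ 0}, g = (FreeGroup.of i) ^ (M 0 i.1)) ∨
       (∃ i j : {i : Fin (n + 1) // i ≠ 0}, i.1 < j.1 ∧
          g = ((FreeGroup.of i)⁻¹ * FreeGroup.of j) ^ (M i.1 j.1))}

section Presentation

variable {n : ℕ} {M : CoxeterMatrix (Fin (n + 1))}

private lemma mk_rel_eq_one {r : FreeGroup {i : Fin (n + 1) // i ≠ 0}}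
    (hr : r ∈ bourbakiRels M) : PresentedGroup.mk (bourbakiRels M) r = 1 :=
  (QuotientGroup.eq_one_iff r).mpr (Subgroup.subset_normalClosure hr)

private lemma relA (i : {i : Fin (n + 1) // i ≠ 0}) :
    (PresentedGroup.of i : PresentedGroup (bourbakiRels M)) ^ (M 0 i.1) = 1 := by
  have h := mk_rel_eq_one (M := M)
    (show (FreeGroup.of i) ^ (M 0 i.1) ∈ bourbakiRels M from Or.inl ⟨i, rfl⟩)
  rw [map_pow] at h
  exact h

private lemma relB {i j : {i : Fin (n + 1) // i ≠ 0}} (h : i.1 < j.1) :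
    ((PresentedGroup.of i)⁻¹ * PresentedGroup.of j :
      PresentedGroup (bourbakiRels M)) ^ (M i.1 j.1) = 1 := by
  have h2 := mk_rel_eq_one (M := M)
    (show ((FreeGroup.of i)⁻¹ * FreeGroup.of j) ^ (M i.1 j.1) ∈ bourbakiRels M from
      Or.inr ⟨i, j, h, rfl⟩)
  rw [map_pow, map_mul, map_inv] at h2
  exact h2

private lemma relB' (i j : {i : Fin (n + 1) // i ≠ 0}) :
    ((PresentedGroup.of i)⁻¹ * PresentedGroup.of j :
      PresentedGroup (bourbakiRels M)) ^ (M i.1 j.1) = 1 := by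
  rcases lt_trichotomy i.1 j.1 with h | h | h
  · exact relB h
  · have : i = j := Subtype.ext h
    subst this
    simp [M.diagonal]
  · have h2 := relB (M := M) h
    have e : ((PresentedGroup.of i)⁻¹ * PresentedGroup.of j :
        PresentedGroup (bourbakiRels M)) = ((PresentedGroup.of j)⁻¹ * PresentedGroup.of i)⁻¹ := by
      group
    rw [e, inv_pow, M.symmetric i.1 j.1, h2, inv_one]

private lemma conj_pow_eq_one {G' : Type*} [Group G'] {a b : G'} {m : ℕ}
    (h : (b⁻¹ * a) ^ m = 1) : (a * b⁻¹) ^ m = 1 := by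
  have e : a * b⁻¹ = (MulAut.conj a) (b⁻¹ * a) := by
    simp [MulAut.conj_apply]; group
  rw [e, ← map_pow, h, map_one]

private lemma relC (i j : {i : Fin (n + 1) // i ≠ 0}) :
    ((PresentedGroup.of i) * (PresentedGroup.of j)⁻¹ :
      PresentedGroup (bourbakiRels M)) ^ (M i.1 j.1) = 1 := by
  refine conj_pow_eq_one ?_
  rw [M.symmetric i.1 j.1]
  exact relB' j i

/-- The inversion endomorphism of the Bourbaki presented group. -/
private def sigmaHom : PresentedGroup (bourbakiRels M) →* PresentedGroup (bourbakiRels M) :=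
  PresentedGroup.toGroup (f := fun i => (PresentedGroup.of i)⁻¹) (by
    rintro r (⟨i, rfl⟩ | ⟨i, j, hij, rfl⟩)
    · rw [map_pow, FreeGroup.lift_apply_of, inv_pow, relA, inv_one]
    · rw [map_pow, map_mul, map_inv, FreeGroup.lift_apply_of, FreeGroup.lift_apply_of, inv_inv]
      exact relC i j)

private lemma sigmaHom_of (i : {i : Fin (n + 1) // i ≠ 0}) :
    sigmaHom (M := M) (PresentedGroup.of i) = (PresentedGroup.of i)⁻¹ :=
  PresentedGroup.toGroup.of _

private lemma sigma_sigma (x : PresentedGroup (bourbakiRels M)) :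
    sigmaHom (M := M) (sigmaHom (M := M) x) = x := by
  have h : (sigmaHom (M := M)).comp (sigmaHom (M := M)) = MonoidHom.id _ := by
    refine PresentedGroup.ext fun i => ?_
    rw [MonoidHom.comp_apply, sigmaHom_of, map_inv, sigmaHom_of, inv_inv, MonoidHom.id_apply]
  exact DFunLike.congr_fun h x

/-- Inversion as an automorphism. -/
private def sigmaAut : MulAut (PresentedGroup (bourbakiRels M)) :=
  { toFun := sigmaHom (M := M)
    invFun := sigmaHom (M := M)
    left_inv := sigma_sigma
    right_inv := sigma_sigma
    map_mul' := map_mul _ }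

private lemma sigmaAut_sq : sigmaAut (M := M) * sigmaAut (M := M) = 1 := by
  ext x
  exact sigma_sigma x

private def gElt (i : Fin (n + 1)) : PresentedGroup (bourbakiRels M) :=
  if h : i = 0 then 1 else PresentedGroup.of ⟨i, h⟩

private lemma sigma_gElt (i : Fin (n + 1)) :
    sigmaAut (M := M) (gElt i) = (gElt i)⁻¹ := by
  unfold gElt
  split
  · simp [sigmaAut]
  · exact sigmaHom_of _

private lemma gElt_rel (i j : Fin (n + 1)) :
    (gElt i * (gElt j)⁻¹ : PresentedGroup (bourbakiRels M)) ^ (M i j) = 1 := by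
  unfold gElt
  by_cases hi : i = 0 <;> by_cases hj : j = 0
  · subst hi; subst hj; simp [M.diagonal]
  · subst hi
    rw [dif_pos rfl, dif_neg hj, one_mul, inv_pow, relA ⟨j, hj⟩, inv_one]
  · subst hj
    rw [dif_neg hi, dif_pos rfl, inv_one, mul_one, M.symmetric i 0]
    exact relA ⟨i, hi⟩
  · rw [dif_neg hi, dif_neg hj]
    exact relC ⟨i, hi⟩ ⟨j, hj⟩

private abbrev Ghat (M : CoxeterMatrix (Fin (n + 1))) :=
  (PresentedGroup (bourbakiRels M)) ⋊[MonoidHom.id (MulAut (PresentedGroup (bourbakiRels M)))]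
    MulAut (PresentedGroup (bourbakiRels M))

private lemma f_liftable : CoxeterMatrix.IsLiftable M
    (fun i => (⟨gElt i, sigmaAut⟩ : Ghat M)) := by
  intro i j
  have e : (⟨gElt i, sigmaAut⟩ * ⟨gElt j, sigmaAut⟩ : Ghat M)
      = SemidirectProduct.inl (gElt i * (gElt j)⁻¹) := by
    refine SemidirectProduct.ext ?_ ?_
    · simp only [SemidirectProduct.mul_left, SemidirectProduct.left_inl, MonoidHom.id_apply,
        sigma_gElt]
    · simp only [SemidirectProduct.mul_right, SemidirectProduct.right_inl, sigmaAut_sq]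
  rw [e, ← map_pow, gElt_rel, map_one]

variable {W : Type*} [Group W] (cs : CoxeterSystem M W)

private noncomputable def psi : W →* Ghat M :=
  cs.lift ⟨fun i => (⟨gElt i, sigmaAut⟩ : Ghat M), f_liftable⟩

private lemma psi_simple (i : Fin (n + 1)) :
    psi cs (cs.simple i) = (⟨gElt i, sigmaAut⟩ : Ghat M) :=
  cs.lift_apply_simple f_liftable i

private lemma phi_liftable :
    ∀ r ∈ bourbakiRels M,
      FreeGroup.lift (fun i : {i : Fin (n + 1) // i ≠ 0} =>
        cs.simple 0 * cs.simple i.1) r = 1 := by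
  rintro r (⟨i, rfl⟩ | ⟨i, j, hij, rfl⟩)
  · rw [map_pow, FreeGroup.lift_apply_of]
    exact cs.simple_mul_simple_pow 0 i.1
  · rw [map_pow, map_mul, map_inv, FreeGroup.lift_apply_of, FreeGroup.lift_apply_of]
    have e : (cs.simple 0 * cs.simple i.1)⁻¹ * (cs.simple 0 * cs.simple j.1)
        = cs.simple i.1 * cs.simple j.1 := by
      rw [mul_inv_rev, cs.inv_simple, cs.inv_simple, mul_assoc,
        cs.simple_mul_simple_cancel_left]
    rw [e]
    exact cs.simple_mul_simple_pow i.1 j.1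

private noncomputable def phi : PresentedGroup (bourbakiRels M) →* W :=
  PresentedGroup.toGroup (phi_liftable cs)

private lemma phi_of (i : {i : Fin (n + 1) // i ≠ 0}) :
    phi cs (PresentedGroup.of i) = cs.simple 0 * cs.simple i.1 :=
  PresentedGroup.toGroup.of _

private lemma psi_comp_phi :
    (psi cs).comp (phi cs) = SemidirectProduct.inl.comp (sigmaHom (M := M)) := by
  refine PresentedGroup.ext fun i => ?_
  rw [MonoidHom.comp_apply, MonoidHom.comp_apply, phi_of, map_mul, psi_simple, psi_simple,
    sigmaHom_of]
  have h1 : gElt (M := M) 0 = 1 := dif_pos rfl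
  have h2 : gElt (M := M) i.1 = PresentedGroup.of i := by
    rw [gElt, dif_neg i.2]
  refine SemidirectProduct.ext ?_ ?_
  · simp only [SemidirectProduct.mul_left, SemidirectProduct.left_inl, MonoidHom.id_apply,
      h1, h2, one_mul]
    exact sigmaHom_of i
  · simp only [SemidirectProduct.mul_right, SemidirectProduct.right_inl, sigmaAut_sq]

private lemma phi_injective : Function.Injective (phi cs) := by
  intro a b hab
  have h1 : (SemidirectProduct.inl (sigmaHom (M := M) a) : Ghat M)
      = SemidirectProduct.inl (sigmaHom (M := M) b) := by
    have h := congrArg (psi cs) hab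
    rw [← MonoidHom.comp_apply, ← MonoidHom.comp_apply, psi_comp_phi] at h
    exact h
  have h2 := SemidirectProduct.inl_injective h1
  have h3 := congrArg (sigmaHom (M := M)) h2
  rwa [sigma_sigma, sigma_sigma] at h3

private lemma pair_mem (i j : Fin (n + 1)) :
    cs.simple i * cs.simple j ∈ Subgroup.closure (Rset cs) := by
  have h0 : ∀ k, cs.simple 0 * cs.simple k ∈ Subgroup.closure (Rset cs) := by
    intro k
    by_cases hk : k = 0
    · subst hk
      rw [cs.simple_mul_simple_self]
      exact one_mem _
    · exact Subgroup.subset_closure ⟨k, hk, rfl⟩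
  have e : cs.simple i * cs.simple j
      = (cs.simple 0 * cs.simple i)⁻¹ * (cs.simple 0 * cs.simple j) := by
    rw [mul_inv_rev, cs.inv_simple, cs.inv_simple, mul_assoc,
      cs.simple_mul_simple_cancel_left]
  rw [e]
  exact mul_mem (inv_mem (h0 i)) (h0 j)

private lemma even_word_mem :
    ∀ ω : List (Fin (n + 1)), Even ω.length →
      cs.wordProd ω ∈ Subgroup.closure (Rset cs)
  | [], _ => by
    rw [cs.wordProd_nil]
    exact one_mem _
  | [i], h => by
    simp at h
  | i :: j :: rest, h => by
    rw [cs.wordProd_cons, cs.wordProd_cons, ← mul_assoc]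
    refine mul_mem (pair_mem cs i j) (even_word_mem rest ?_)
    simpa [Nat.even_add_one, parity_simps] using h

private lemma closure_Rset_eq_alt : Subgroup.closure (Rset cs) = alt cs := by
  apply le_antisymm
  · rw [Subgroup.closure_le]
    rintro x ⟨i, hi, rfl⟩
    show Even (cs.length (cs.simple 0 * cs.simple i))
    rw [Nat.even_iff]
    have h := cs.length_mul_mod_two (cs.simple 0) (cs.simple i)
    rw [cs.length_simple, cs.length_simple] at h
    omega
  · intro w hw
    have hw' : Even (cs.length w) := hw
    obtain ⟨ω, hlen, rfl⟩ := cs.exists_reduced_word w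
    exact even_word_mem cs ω (by have hl : cs.length (cs.wordProd ω) = ω.length := hlen; rw [← hl]; exact hw')

private lemma phi_range : (phi cs).range = alt cs := by
  rw [MonoidHom.range_eq_map, ← PresentedGroup.closure_range_of (bourbakiRels M),
    MonoidHom.map_closure]
  have himg : phi cs '' Set.range PresentedGroup.of = Rset cs := by
    ext x
    constructor
    · rintro ⟨_, ⟨i, rfl⟩, rfl⟩
      exact ⟨i.1, i.2, phi_of cs i⟩
    · rintro ⟨i, hi, rfl⟩
      exact ⟨PresentedGroup.of ⟨i, hi⟩, ⟨⟨i, hi⟩, rfl⟩, phi_of cs ⟨i, hi⟩⟩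
  rw [himg]
  exact closure_Rset_eq_alt cs

end Presentation


/-- The alternating subgroup `W⁺` is generated by the elements `rᵢ = s₀ sᵢ`
and has the Bourbaki presentation
`⟨r₁,…,rₙ : rᵢ^{m₀ᵢ} = (rᵢ⁻¹ rⱼ)^{mᵢⱼ} = e⟩`. -/
theorem statement0 :
    Subgroup.closure (Rset cs) = alt cs ∧
    ∃ φ : PresentedGroup (bourbakiRels M) →* W,
      Function.Injective φ ∧ φ.range = alt cs ∧
      ∀ i : {i : Fin (n + 1) // i ≠ 0},
        φ (PresentedGroup.of i) = cs.simple 0 * cs.simple i.1 := by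
  exact ⟨closure_Rset_eq_alt cs, phi cs, phi_injective cs, phi_range cs, fun i => phi_of cs i⟩

end AltCox
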